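/- Let N ∈ ℕ and let μ_N : X → U be a feedback law with closed-loop trajectory x(n+1) = f(x(n), μ_N(x(n))), x(0) = x₀ ∈ X. Suppose the finite-horizon optimal value function V_N satisfies the relaxed Lyapunov inequality V_N(x(n)) ≥ V_N(x(n+1)) + α·ℓ(x(n), μ_N(x(n))) for some α ∈ [0,1] and all n ∈ ℕ. Then for all n ∈ ℕ: α·V_∞(x(n)) ≤ α·V_∞^{μ_N}(x(n)) ≤ V_N(x(n)) ≤ V_∞(x(n)). -/

import Mathlib

open scoped ENNReal NNReal

noncomputable section

variable {X U : Type*}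

/-- Open-loop trajectory: `x_u(·, x₀)` with `x_u(0,x₀) = x₀`,
`x_u(k+1,x₀) = f(x_u(k,x₀), u(k))`. -/
def otraj (f : X → U → X) (u : ℕ → U) (x₀ : X) : ℕ → X
  | 0 => x₀
  | k + 1 => f (otraj f u x₀ k) (u k)

/-- Closed-loop trajectory under the feedback law `μ`. -/
def ctraj (f : X → U → X) (μ : X → U) (x₀ : X) : ℕ → X
  | 0 => x₀
  | n + 1 => f (ctraj f μ x₀ n) (μ (ctraj f μ x₀ n))

/-- Finite-horizon cost `J_N(x₀, u)`. -/
def costJ (f : X → U → X) (ℓ : X → U → ℝ≥0) (N : ℕ) (x₀ : X) (u : ℕ → U) : ℝ≥0 :=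
  ∑ k ∈ Finset.range N, ℓ (otraj f u x₀ k) (u k)

/-- Finite-horizon optimal value function `V_N(x₀)`. -/
def VN (f : X → U → X) (ℓ : X → U → ℝ≥0) (N : ℕ) (x₀ : X) : ℝ≥0 :=
  ⨅ u : ℕ → U, costJ f ℓ N x₀ u

/-- Infinite-horizon optimal value function `V_∞(x₀)`, with values in `[0,∞]`. -/
def Vinf (f : X → U → X) (ℓ : X → U → ℝ≥0) (x₀ : X) : ℝ≥0∞ :=
  ⨅ u : ℕ → U, ∑' k, (ℓ (otraj f u x₀ k) (u k) : ℝ≥0∞)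

/-- Closed-loop infinite-horizon cost `V_∞^μ(x₀)`, with values in `[0,∞]`. -/
def Vcl (f : X → U → X) (ℓ : X → U → ℝ≥0) (μ : X → U) (x₀ : X) : ℝ≥0∞ :=
  ∑' n, (ℓ (ctraj f μ x₀ n) (μ (ctraj f μ x₀ n)) : ℝ≥0∞)

lemma ctraj_shift (f : X → U → X) (μ : X → U) (x : ℕ → X)
    (hx : ∀ n : ℕ, x (n + 1) = f (x n) (μ (x n))) (n k : ℕ) :
    ctraj f μ (x n) k = x (n + k) := by
  induction k with
  | zero => rfl
  | succ k ih =>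
    show f (ctraj f μ (x n) k) (μ (ctraj f μ (x n) k)) = x (n + (k + 1))
    rw [ih, show n + (k + 1) = (n + k) + 1 from rfl, hx (n + k)]

lemma otraj_eq_ctraj (f : X → U → X) (μ : X → U) (y : X) (k : ℕ) :
    otraj f (fun j => μ (ctraj f μ y j)) y k = ctraj f μ y k := by
  induction k with
  | zero => rfl
  | succ k ih => simp [otraj, ctraj, ih]

lemma Vinf_le_Vcl (f : X → U → X) (ℓ : X → U → ℝ≥0) (μ : X → U) (y : X) :
    Vinf f ℓ y ≤ Vcl f ℓ μ y := by
  refine iInf_le_of_le (fun j => μ (ctraj f μ y j)) ?_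
  simp [Vcl, otraj_eq_ctraj]

lemma VN_le_Vinf (f : X → U → X) (ℓ : X → U → ℝ≥0) (N : ℕ) (y : X) :
    (VN f ℓ N y : ℝ≥0∞) ≤ Vinf f ℓ y := by
  refine le_iInf fun u => ?_
  calc (VN f ℓ N y : ℝ≥0∞) ≤ (costJ f ℓ N y u : ℝ≥0∞) := by
        exact_mod_cast ciInf_le (OrderBot.bddBelow _) u
    _ ≤ _ := by
        rw [costJ, ENNReal.coe_finset_sum]
        exact ENNReal.summable.sum_le_tsum _ (fun _ _ => zero_le)

/-- Proposition 3 of Grüne–Pannek. If the finite-horizon optimal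
value function `V_N` satisfies the relaxed Lyapunov inequality along the closed loop
of the NMPC feedback `μ_N` for some `α ∈ [0,1]`, then
`α V_∞(x(n)) ≤ α V_∞^{μ_N}(x(n)) ≤ V_N(x(n)) ≤ V_∞(x(n))` for all `n`. -/
theorem statement1 {X U : Type*} [Nonempty X] [Nonempty U]
    (f : X → U → X) (ℓ : X → U → ℝ≥0)
    (N : ℕ) (μN : X → U) (x₀ : X) (x : ℕ → X)
    (hx0 : x 0 = x₀)
    (hx : ∀ n : ℕ, x (n + 1) = f (x n) (μN (x n)))
    (α : ℝ≥0) (hα : α ≤ 1)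
    (hV : ∀ n : ℕ,
      VN f ℓ N (x (n + 1)) + α * ℓ (x n) (μN (x n)) ≤ VN f ℓ N (x n)) :
    ∀ n : ℕ,
      (α : ℝ≥0∞) * Vinf f ℓ (x n) ≤ (α : ℝ≥0∞) * Vcl f ℓ μN (x n) ∧
      (α : ℝ≥0∞) * Vcl f ℓ μN (x n) ≤ (VN f ℓ N (x n) : ℝ≥0∞) ∧
      (VN f ℓ N (x n) : ℝ≥0∞) ≤ Vinf f ℓ (x n) := by
  have tele : ∀ n m : ℕ,
      (∑ k ∈ Finset.range m, α * ℓ (x (n + k)) (μN (x (n + k))))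
        + VN f ℓ N (x (n + m)) ≤ VN f ℓ N (x n) := by
    intro n m
    induction m with
    | zero => simp
    | succ m ih =>
      rw [Finset.sum_range_succ]
      calc (∑ k ∈ Finset.range m, α * ℓ (x (n + k)) (μN (x (n + k))))
            + α * ℓ (x (n + m)) (μN (x (n + m))) + VN f ℓ N (x (n + (m + 1)))
          = (∑ k ∈ Finset.range m, α * ℓ (x (n + k)) (μN (x (n + k))))
            + (VN f ℓ N (x ((n + m) + 1)) + α * ℓ (x (n + m)) (μN (x (n + m)))) := by
            ring_nf
        _ ≤ (∑ k ∈ Finset.range m, α * ℓ (x (n + k)) (μN (x (n + k))))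
            + VN f ℓ N (x (n + m)) := by
            gcongr
            exact hV (n + m)
        _ ≤ _ := ih
  intro n
  refine ⟨?_, ?_, VN_le_Vinf f ℓ N (x n)⟩
  · exact mul_le_mul_right (Vinf_le_Vcl f ℓ μN (x n)) _
  · have hVcl : (α : ℝ≥0∞) * Vcl f ℓ μN (x n)
        = ∑' k, ((α * ℓ (x (n + k)) (μN (x (n + k))) : ℝ≥0) : ℝ≥0∞) := by
      rw [Vcl, ← ENNReal.tsum_mul_left]
      congr 1
      ext k
      rw [ctraj_shift f μN x hx n k, ENNReal.coe_mul]
    rw [hVcl, ENNReal.tsum_eq_iSup_sum]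
    refine iSup_le fun s => ?_
    obtain ⟨m, hm⟩ := s.exists_nat_subset_range
    calc (∑ k ∈ s, ((α * ℓ (x (n + k)) (μN (x (n + k))) : ℝ≥0) : ℝ≥0∞))
        ≤ ∑ k ∈ Finset.range m, ((α * ℓ (x (n + k)) (μN (x (n + k))) : ℝ≥0) : ℝ≥0∞) :=
          Finset.sum_le_sum_of_subset hm
      _ ≤ (VN f ℓ N (x n) : ℝ≥0∞) := by
          rw [← ENNReal.coe_finset_sum]
          exact_mod_cast le_trans (le_add_right le_rfl) (tele n m)
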